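/- Let p be a prime, χ a nontrivial (hence primitive) Dirichlet character modulo p, ℓ ≥ 1 an integer, q' a positive integer with p ∤ q', and set q = p^ℓ · q'. Let a be an integer with gcd(a, q) = 1 and m an integer. Then Σ_{u=0}^{pq−1} χ(u) · e(−a·u/q + m·u/(pq)) equals q · τ(χ) · χ(q') · \overline{χ}((m − a·p)/p^ℓ) if q divides m − a·p (in which case (m − a·p)/p^ℓ is an integer), and equals 0 otherwise. -/

import Mathlib

open Finset

/-- `e(x) = exp(2πi x)`. -/
noncomputable def e (x : ℝ) : ℂ := Complex.exp (2 * Real.pi * Complex.I * x)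

-- auxiliary lemmas

lemma e_add (x y : ℝ) : e (x + y) = e x * e y := by
  simp only [e, Complex.ofReal_add, mul_add, Complex.exp_add]

lemma e_int (n : ℤ) : e n = 1 := by
  have := Complex.exp_int_mul_two_pi_mul_I n
  rw [e]
  rw [← this]
  push_cast
  ring_nf

lemma e_add_int (x : ℝ) (n : ℤ) : e (x + n) = e x := by
  rw [e_add, e_int, mul_one]

lemma e_nat_pow (x : ℝ) (k : ℕ) : e x ^ k = e ((k : ℝ) * x) := by
  rw [e, e, ← Complex.exp_nat_mul]
  push_cast
  ring_nf

lemma e_eq_one_iff (q : ℕ) (hq : 0 < q) (N : ℤ) : e ((N : ℝ) / q) = 1 ↔ (q : ℤ) ∣ N := by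
  rw [e, Complex.exp_eq_one_iff]
  constructor
  · rintro ⟨n, hn⟩
    refine ⟨n, ?_⟩
    have h2 : (2 * Real.pi * Complex.I : ℂ) ≠ 0 := by
      simp [Real.pi_ne_zero, Complex.I_ne_zero]
    rw [mul_comm (n:ℂ) _] at hn
    have := mul_left_cancel₀ h2 hn
    have hq' : (q : ℝ) ≠ 0 := Nat.cast_ne_zero.mpr hq.ne'
    have : ((N : ℝ) / q : ℝ) = (n : ℝ) := by exact_mod_cast this
    field_simp at this
    have h3 : N = n * q := by rw [mul_comm]; exact_mod_cast this
    exact h3.trans (mul_comm _ _)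
  · rintro ⟨n, rfl⟩
    refine ⟨n, ?_⟩
    have hq' : (q : ℂ) ≠ 0 := Nat.cast_ne_zero.mpr hq.ne'
    push_cast
    field_simp

lemma sum_e (q : ℕ) (hq : 0 < q) (N : ℤ) :
    ∑ k ∈ range q, e ((N : ℝ) * k / q) = if (q : ℤ) ∣ N then (q : ℂ) else 0 := by
  have hterm : ∀ k : ℕ, e ((N : ℝ) * k / q) = e ((N : ℝ) / q) ^ k := by
    intro k
    rw [e_nat_pow]
    congr 1
    ring
  by_cases h : (q : ℤ) ∣ N
  · rw [if_pos h]
    have h1 : e ((N : ℝ) / q) = 1 := (e_eq_one_iff q hq N).mpr h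
    simp [hterm, h1]
  · rw [if_neg h]
    have h1 : e ((N : ℝ) / q) ≠ 1 := fun hc => h ((e_eq_one_iff q hq N).mp hc)
    simp only [hterm]
    rw [geom_sum_eq h1]
    have : e ((N : ℝ) / q) ^ q = 1 := by
      rw [e_nat_pow]
      have hq' : (q : ℝ) ≠ 0 := Nat.cast_ne_zero.mpr hq.ne'
      rw [mul_comm, div_mul_cancel₀ _ hq']
      exact e_int N
    rw [this]
    simp

lemma sum_range_eq_sum_zmod (p : ℕ) [NeZero p] (f : ℕ → ℂ) :
    ∑ s ∈ range p, f s = ∑ x : ZMod p, f x.val := by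
  refine Finset.sum_nbij' (fun s => (s : ZMod p)) (fun x => x.val)
    (fun a _ => Finset.mem_univ _) (fun x _ => Finset.mem_range.mpr (ZMod.val_lt x))
    (fun a ha => ZMod.val_cast_of_lt (Finset.mem_range.mp ha)) (fun x _ => ZMod.natCast_rightInverse x)
    (fun a ha => by rw [ZMod.val_cast_of_lt (Finset.mem_range.mp ha)])

lemma gauss_twist (p : ℕ) (hp : p.Prime) (χ : DirichletCharacter ℂ p) (hχ : χ ≠ 1) (M : ℤ) :
    ∑ s ∈ range p, χ (s : ZMod p) * e ((M : ℝ) * s / p)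
      = (starRingEnd ℂ) (χ ((M : ℤ) : ZMod p)) *
        ∑ u ∈ range p, χ (u : ZMod p) * e ((u : ℝ) / p) := by
  haveI : Fact p.Prime := ⟨hp⟩
  haveI : NeZero p := ⟨hp.pos.ne'⟩
  have hp0 : 0 < p := hp.pos
  have hpR : (p : ℝ) ≠ 0 := Nat.cast_ne_zero.mpr hp0.ne'
  rw [sum_range_eq_sum_zmod p (fun s => χ (s : ZMod p) * e ((M : ℝ) * s / p)),
      sum_range_eq_sum_zmod p (fun u => χ (u : ZMod p) * e ((u : ℝ) / p))]
  simp only [show ∀ x : ZMod p, ((x.val : ℕ) : ZMod p) = x from ZMod.natCast_rightInverse]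
  by_cases hM : (M : ZMod p) = 0
  · rw [hM]
    obtain ⟨M', rfl⟩ := (ZMod.intCast_zmod_eq_zero_iff_dvd M p).mp hM
    have h0 : χ (0 : ZMod p) = 0 := by
      haveI : Nontrivial (ZMod p) := ZMod.nontrivial_iff.mpr hp.one_lt.ne'
      exact χ.map_nonunit not_isUnit_zero
    rw [h0, map_zero, zero_mul]
    have he1 : ∀ x : ZMod p, e (((p : ℤ) * M' : ℤ) * x.val / p) = 1 := by
      intro x
      have : (((p : ℤ) * M' : ℤ) : ℝ) * x.val / p = ((M' * x.val : ℤ) : ℝ) := by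
        push_cast
        field_simp
      rw [this, e_int]
    simp only [he1, mul_one]
    exact MulChar.sum_eq_zero_of_ne_one hχ
  · set c : ZMod p := (M : ZMod p) with hc
    have hcne : c ≠ 0 := hM
    have hcinv : c⁻¹ ≠ 0 := inv_ne_zero hcne
    have hre : ∑ x : ZMod p, χ x * e ((M : ℝ) * x.val / p)
        = ∑ y : ZMod p, χ (c⁻¹ * y) * e ((M : ℝ) * (c⁻¹ * y).val / p) :=
      (Fintype.sum_equiv (Equiv.mulLeft₀ c⁻¹ hcinv) _ _ (fun y => rfl)).symm
    rw [hre]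
    have hpt : ∀ y : ZMod p, χ (c⁻¹ * y) * e ((M : ℝ) * (c⁻¹ * y).val / p)
        = χ c⁻¹ * (χ y * e ((y.val : ℝ) / p)) := by
      intro y
      rw [map_mul]
      have hmod : ((M * ((c⁻¹ * y).val : ℤ) - (y.val : ℤ) : ℤ) : ZMod p) = 0 := by
        push_cast
        simp only [ZMod.natCast_val, ZMod.intCast_cast, ZMod.intCast_zmod_cast]
        rw [← hc]
        field_simp
        simp [ZMod.cast_id', mul_div_cancel₀ _ hcne]
      obtain ⟨k, hk⟩ := (ZMod.intCast_zmod_eq_zero_iff_dvd _ p).mp hmod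
      have : (M : ℝ) * (c⁻¹ * y).val / p = (y.val : ℝ) / p + k := by
        have h2 : (M : ℝ) * ((c⁻¹ * y).val : ℕ) = ((y.val : ℕ) : ℝ) + (p : ℝ) * k := by
          exact_mod_cast congrArg (Int.cast : ℤ → ℝ)
            (by linarith : M * ((c⁻¹ * y).val : ℤ) = (y.val : ℤ) + (p : ℤ) * k)
        rw [show (M : ℝ) * ((c⁻¹ * y).val : ℕ) / p = (((y.val : ℕ) : ℝ) + (p : ℝ) * k) / p from
          by rw [h2], add_div, mul_div_cancel_left₀ _ hpR]
      rw [this, e_add_int]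
      ring
    simp only [hpt]
    rw [← Finset.mul_sum]
    congr 1
    rw [show (starRingEnd ℂ) (χ c) = star (χ c) from rfl, MulChar.star_apply', MulChar.inv_apply']

/-- Evaluation of the complete character sum modulo `pq` when `p^ℓ ∥ q`, `ℓ ≥ 1`:
`Σ_{u mod pq} χ(u) e(-au/q + mu/(pq))` equals `q τ(χ) χ(q') \bar{χ}((m - ap)/p^ℓ)` if
`q ∣ m - ap`, and `0` otherwise. -/
theorem char_sum_ramified (p : ℕ) (hp : p.Prime) (χ : DirichletCharacter ℂ p) (hχ : χ ≠ 1)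
    (ℓ : ℕ) (hℓ : 1 ≤ ℓ) (q' : ℕ) (hq' : 0 < q') (hpq' : ¬ p ∣ q')
    (q : ℕ) (hqdef : q = p ^ ℓ * q')
    (a : ℤ) (ha : Int.gcd a q = 1) (m : ℤ) :
    (∑ u ∈ Finset.range (p * q), χ (u : ZMod p) *
        e (-(a : ℝ) * u / q + (m : ℝ) * u / (p * q))) =
      if (q : ℤ) ∣ (m - a * p) then
        (q : ℂ) * (∑ u ∈ Finset.range p, χ (u : ZMod p) * e ((u : ℝ) / p)) *
          χ ((q' : ℕ) : ZMod p) *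
          (starRingEnd ℂ) (χ (((m - a * p) / (p : ℤ) ^ ℓ : ℤ) : ZMod p))
      else 0 := by
  haveI : Fact p.Prime := ⟨hp⟩
  have hp0 : 0 < p := hp.pos
  have hq0 : 0 < q := by rw [hqdef]; positivity
  have hpR : (p : ℝ) ≠ 0 := Nat.cast_ne_zero.mpr hp0.ne'
  have hqR : (q : ℝ) ≠ 0 := Nat.cast_ne_zero.mpr hq0.ne'
  set N : ℤ := m - a * p with hN
  have hexp : ∀ u : ℕ, (-(a : ℝ) * u / q + (m : ℝ) * u / (p * q)) = (N : ℝ) * u / (p * q) := by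
    intro u
    rw [hN]
    push_cast
    field_simp
    ring
  simp only [hexp]
  -- split the range
  have hsplit : (∑ u ∈ Finset.range (p * q), χ (u : ZMod p) * e ((N : ℝ) * u / (p * q)))
      = ∑ x ∈ Finset.range p ×ˢ Finset.range q,
          χ ((x.1 + p * x.2 : ℕ) : ZMod p) * e ((N : ℝ) * (x.1 + p * x.2 : ℕ) / (p * q)) := by
    refine Finset.sum_nbij' (fun u => (u % p, u / p)) (fun x => x.1 + p * x.2) ?_ ?_ ?_ ?_ ?_
    · intro u hu
      rw [Finset.mem_range] at hu
      rw [Finset.mem_product, Finset.mem_range, Finset.mem_range]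
      exact ⟨Nat.mod_lt u hp0, Nat.div_lt_of_lt_mul hu⟩
    · intro x hx
      rw [Finset.mem_product, Finset.mem_range, Finset.mem_range] at hx
      rw [Finset.mem_range]
      calc x.1 + p * x.2 < p + p * x.2 := by omega
        _ = p * (x.2 + 1) := by ring
        _ ≤ p * q := Nat.mul_le_mul_left p hx.2
    · intro u hu
      simp [Nat.mod_add_div]
    · intro x hx
      rw [Finset.mem_product, Finset.mem_range, Finset.mem_range] at hx
      have h1 : (x.1 + p * x.2) % p = x.1 := by
        rw [Nat.add_mul_mod_self_left, Nat.mod_eq_of_lt hx.1]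
      have h2 : (x.1 + p * x.2) / p = x.2 := by
        rw [Nat.add_mul_div_left _ _ hp0, Nat.div_eq_of_lt hx.1, zero_add]
      exact Prod.ext h1 h2
    · intro u hu
      rw [Nat.mod_add_div]
  rw [hsplit, Finset.sum_product]
  have hpt : ∀ s k : ℕ, χ ((s + p * k : ℕ) : ZMod p) * e ((N : ℝ) * (s + p * k : ℕ) / (p * q))
      = χ (s : ZMod p) * e ((N : ℝ) * s / (p * q)) * e ((N : ℝ) * k / q) := by
    intro s k
    have hcast : ((s + p * k : ℕ) : ZMod p) = (s : ZMod p) := by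
      push_cast
      simp [ZMod.natCast_self]
    have hadd : (N : ℝ) * (s + p * k : ℕ) / (p * q) = (N : ℝ) * s / (p * q) + (N : ℝ) * k / q := by
      push_cast
      field_simp
    rw [hcast, hadd, e_add, mul_assoc]
  simp only [hpt]
  have hinner : ∀ s : ℕ, ∑ k ∈ Finset.range q,
      χ (s : ZMod p) * e ((N : ℝ) * s / (p * q)) * e ((N : ℝ) * k / q)
      = χ (s : ZMod p) * e ((N : ℝ) * s / (p * q)) * (if (q : ℤ) ∣ N then (q : ℂ) else 0) := by
    intro s
    rw [← Finset.mul_sum, sum_e q hq0 N]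
  simp only [hinner]
  by_cases hdvd : (q : ℤ) ∣ N
  · rw [if_pos hdvd]
    obtain ⟨M, hM⟩ := id hdvd
    have hMe : ∀ s : ℕ, (N : ℝ) * s / (p * q) = (M : ℝ) * s / p := by
      intro s
      rw [hM]
      push_cast
      field_simp
    simp only [hMe, if_pos (⟨M, hM⟩ : (q : ℤ) ∣ N)]
    rw [← Finset.sum_mul, gauss_twist p hp χ hχ M, if_pos hdvd]
    have hdiv : (N / (p : ℤ) ^ ℓ : ℤ) = (q' : ℤ) * M := by
      rw [hM, hqdef]
      push_cast
      rw [show ((p : ℤ) ^ ℓ * (q' : ℤ)) * M = (p : ℤ) ^ ℓ * ((q' : ℤ) * M) by ring]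
      exact Int.mul_ediv_cancel_left _ (by positivity)
    rw [hdiv]
    have hq'ne : ((q' : ℕ) : ZMod p) ≠ 0 := by
      rw [Ne, ZMod.natCast_eq_zero_iff]
      exact hpq'
    have hcast2 : (((q' : ℤ) * M : ℤ) : ZMod p) = ((q' : ℕ) : ZMod p) * ((M : ℤ) : ZMod p) := by
      push_cast
      ring
    rw [hcast2, map_mul, map_mul]
    have hconj : χ ((q' : ℕ) : ZMod p) * (starRingEnd ℂ) (χ ((q' : ℕ) : ZMod p)) = 1 := by
      rw [show (starRingEnd ℂ) (χ ((q' : ℕ) : ZMod p)) = star (χ ((q' : ℕ) : ZMod p)) from rfl,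
        MulChar.star_apply', MulChar.inv_apply', ← map_mul, mul_inv_cancel₀ hq'ne, map_one]
    rw [show ((q : ℕ) : ℂ) * (∑ u ∈ Finset.range p, χ (u : ZMod p) * e ((u : ℝ) / p)) *
          χ ((q' : ℕ) : ZMod p) *
          ((starRingEnd ℂ) (χ ((q' : ℕ) : ZMod p)) * (starRingEnd ℂ) (χ ((M : ℤ) : ZMod p)))
        = (χ ((q' : ℕ) : ZMod p) * (starRingEnd ℂ) (χ ((q' : ℕ) : ZMod p))) *
          (((starRingEnd ℂ) (χ ((M : ℤ) : ZMod p)) *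
            ∑ u ∈ Finset.range p, χ (u : ZMod p) * e ((u : ℝ) / p)) * ((q : ℕ) : ℂ)) from by ring,
      hconj, one_mul]
  · rw [if_neg hdvd]
    simp [if_neg hdvd]
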